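/- The vector β* given by the backward recursion βᵢ* = ((2^t−1)/(P hᵢ))(P hᵢ Σ_{l=i+1}^N β_l* + σ²) is the unique minimizer of Σᵢ βᵢ over the set {β ∈ ℝ^N : βᵢ ≥ 0, βᵢ P hᵢ ≥ (2^t−1)(P hᵢ Σ_{l=i+1}^N β_l + σ²) ∀ i}. -/

import Mathlib

open Finset Real
set_option maxRecDepth 4000

/-- the vector produced by the backward recursion is the unique
minimizer of `∑ β i` over the LP feasible set. -/
theorem noma_backward_recursion_unique_minimizer (N : ℕ) (hN : 1 ≤ N)
    (P σ2 : ℝ) (hP : 0 < P) (hσ : 0 < σ2) (h : Fin N → ℝ) (hh : ∀ i, 0 < h i)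
    (t : ℝ) (ht : 0 < t)
    (F : Set (Fin N → ℝ))
    (hF : F = {β : Fin N → ℝ | ∀ i : Fin N, 0 ≤ β i ∧
      ((2 : ℝ) ^ t - 1) *
          (P * h i * (∑ l ∈ Finset.univ.filter (fun l => i < l), β l) + σ2) ≤
        β i * P * h i})
    (βs : Fin N → ℝ)
    (hrec : ∀ i : Fin N, βs i = ((2 : ℝ) ^ t - 1) / (P * h i) *
      (P * h i * (∑ l ∈ Finset.univ.filter (fun l => i < l), βs l) + σ2)) :
    βs ∈ F ∧ (∀ β ∈ F, (∑ i, βs i) ≤ ∑ i, β i) ∧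
    (∀ β ∈ F, (∑ i, β i) = (∑ i, βs i) → β = βs) := by
  obtain ⟨c, hc_def⟩ : ∃ c : ℝ, (2:ℝ) ^ t - 1 = c := ⟨_, rfl⟩
  rw [hc_def] at hF hrec
  have hc : 0 < c := by
    have h1 : (1:ℝ) < 2 ^ t :=
      (Real.one_lt_rpow_iff_of_pos (by norm_num)).mpr (Or.inl ⟨by norm_num, ht⟩)
    linarith [hc_def ▸ (by linarith : (0:ℝ) < 2 ^ t - 1)]
  have hph : ∀ i : Fin N, 0 < P * h i := fun i => mul_pos hP (hh i)
  set S : (Fin N → ℝ) → ℕ → ℝ :=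
    fun β k => ∑ l ∈ univ.filter (fun l : Fin N => k ≤ l.val), β l with hS_def
  have hzero : ∀ β k, N ≤ k → S β k = 0 := by
    intro β k hk
    have : (univ.filter (fun l : Fin N => k ≤ l.val)) = ∅ := by
      ext l
      simp only [Finset.mem_filter, Finset.mem_univ, true_and, Finset.notMem_empty, iff_false, not_le]
      exact l.isLt.trans_le hk
    simp [hS_def, this]
  have hstep : ∀ (β : Fin N → ℝ) (k : ℕ) (hk : k < N),
      S β k = β ⟨k, hk⟩ + S β (k+1) := by
    intro β k hk
    have hset : (univ.filter (fun l : Fin N => k ≤ l.val))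
        = insert ⟨k, hk⟩ (univ.filter (fun l : Fin N => k+1 ≤ l.val)) := by
      ext l
      simp only [Finset.mem_filter, Finset.mem_univ, true_and, Finset.mem_insert, Fin.ext_iff]
      omega
    rw [hS_def]
    simp only [hset]
    rw [sum_insert (by simp)]
  have hT : ∀ (β : Fin N → ℝ) (i : Fin N),
      (∑ l ∈ univ.filter (fun l => i < l), β l) = S β (i.val + 1) := by
    intro β i
    apply Finset.sum_congr _ (fun _ _ => rfl)
    ext l
    simp only [Finset.mem_filter, Finset.mem_univ, true_and, Fin.lt_def]
    omega
  have hrec' : ∀ i : Fin N, βs i = c * S βs (i.val + 1) + c * σ2 / (P * h i) := by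
    intro i
    have e := hrec i
    rw [hT] at e
    rw [e]
    have := (hph i).ne'
    have hhi := (hh i).ne'; have hP0 := hP.ne'
    field_simp
  have hA : ∀ m k, N ≤ k + m → 0 ≤ S βs k := by
    intro m
    induction m with
    | zero => intro k hk; rw [hzero βs k (by omega)]
    | succ m ih =>
      intro k hk
      by_cases hkN : N ≤ k
      · rw [hzero βs k hkN]
      · have hklt : k < N := by omega
        have ih' : 0 ≤ S βs (k+1) := ih (k+1) (by omega)
        have e3 := hrec' ⟨k, hklt⟩
        simp only at e3
        rw [hstep βs k hklt, e3]
        have hd : 0 < c * σ2 / (P * h ⟨k, hklt⟩) :=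
          div_pos (mul_pos hc hσ) (hph _)
        have h0 : 0 ≤ c * S βs (k+1) := mul_nonneg hc.le ih'
        linarith
  have hA' : ∀ k, 0 ≤ S βs k := fun k => hA N k (by omega)
  have hnn : ∀ i : Fin N, 0 ≤ βs i := by
    intro i
    rw [hrec' i]
    have hd : 0 < c * σ2 / (P * h i) := div_pos (mul_pos hc hσ) (hph i)
    have h0 := mul_nonneg hc.le (hA' (i.val + 1))
    linarith
  have hmem : βs ∈ F := by
    rw [hF]
    intro i
    refine ⟨hnn i, le_of_eq ?_⟩
    rw [hrec i]
    have := (hph i).ne'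
    have hhi := (hh i).ne'; have hP0 := hP.ne'
    field_simp
  have hlow : ∀ β ∈ F, ∀ i : Fin N,
      c * S β (i.val + 1) + c * σ2 / (P * h i) ≤ β i := by
    intro β hβ i
    rw [hF] at hβ
    have hcon := (hβ i).2
    rw [hT] at hcon
    have hph' := hph i
    have hcon' : c * (P * h i * S β (i.val + 1) + σ2) ≤ β i * (P * h i) := by
      rw [← mul_assoc]; exact hcon
    have hEq : (c * S β (i.val + 1) + c * σ2 / (P * h i)) * (P * h i)
        = c * (P * h i * S β (i.val + 1) + σ2) := by
      have hhi := (hh i).ne'; have hP0 := hP.ne'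
      field_simp
    have hle : (c * S β (i.val + 1) + c * σ2 / (P * h i)) * (P * h i)
        ≤ β i * (P * h i) := by rw [hEq]; exact hcon'
    exact le_of_mul_le_mul_right hle hph'
  have hB : ∀ β ∈ F, ∀ m k, N ≤ k + m → S βs k ≤ S β k := by
    intro β hβ m
    induction m with
    | zero => intro k hk; rw [hzero βs k (by omega), hzero β k (by omega)]
    | succ m ih =>
      intro k hk
      by_cases hkN : N ≤ k
      · rw [hzero βs k hkN, hzero β k hkN]
      · have hklt : k < N := by omega
        have ih' := ih (k+1) (by omega)
        have hl := hlow β hβ ⟨k, hklt⟩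
        have e3 := hrec' ⟨k, hklt⟩
        simp only at hl e3
        rw [hstep βs k hklt, hstep β k hklt, e3]
        nlinarith
  have hB' : ∀ β ∈ F, ∀ k, S βs k ≤ S β k := fun β hβ k => hB β hβ N k (by omega)
  have hS0 : ∀ β : Fin N → ℝ, (∑ i, β i) = S β 0 := by
    intro β
    rw [hS_def]
    apply Finset.sum_congr _ (fun _ _ => rfl)
    ext l
    simp only [Finset.mem_filter, Finset.mem_univ, true_and, Nat.zero_le]
  refine ⟨hmem, ?_, ?_⟩
  · intro β hβ
    rw [hS0, hS0]
    exact hB' β hβ 0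
  · intro β hβ heq
    rw [hS0, hS0] at heq
    have hEq : ∀ k, S β k = S βs k := by
      intro k
      induction k with
      | zero => exact heq
      | succ k ih =>
        by_cases hkN : N ≤ k
        · rw [hzero βs _ (by omega), hzero β _ (by omega)]
        · have hklt : k < N := by omega
          have hl := hlow β hβ ⟨k, hklt⟩
          have hb := hB' β hβ (k+1)
          have e1 := hstep β k hklt
          have e2 := hstep βs k hklt
          have e3 := hrec' ⟨k, hklt⟩
          simp only at hl e1 e2 e3
          nlinarith
    funext i
    have hklt : i.val < N := i.isLt
    have e1 := hstep β i.val hklt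
    have e2 := hstep βs i.val hklt
    have h1 := hEq i.val
    have h2 := hEq (i.val + 1)
    have : β ⟨i.val, hklt⟩ = βs ⟨i.val, hklt⟩ := by linarith
    simpa using this
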